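/- Let A be a divided power algebra in characteristic p and M a module over the underlying commutative algebra U(A). The lift map λ: T°(Γ⁺_A(M)) → Γ⁺_A(M) determined on generators by λ(a) = a, λ(m) = 0, λ(da) = 0, λ(dm) = m (for a ∈ A, m ∈ M) is a well-defined morphism of divided power algebras. -/

import Mathlib

open scoped TensorProduct

/-- Iterated product with respect to a bilinear multiplication:
`mpow mul a n = a^{*(n+1)}` (so `mpow mul a 0 = a`). -/
def mpow {F : Type} [Field F] {A : Type} [AddCommGroup A] [Module F A]
    (mul : A →ₗ[F] A →ₗ[F] A) (a : A) : ℕ → A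
  | 0 => a
  | n + 1 => mul (mpow mul a n) a

/-- A (non-unital) divided power algebra over a field `F` of characteristic `p`,
in Soublin's presentation: a commutative associative `F`-algebra together with a
`p`-th divided power operation satisfying `a^{*p} = 0`,
`(a+b)^[p] = a^[p] + b^[p] + ∑_{i=1}^{p-1} ((-1)^i/i) a^{*i} * b^{*(p-i)}`
and `(a*b)^[p] = 0`. -/
structure DPAlg (p : ℕ) (F : Type) [Field F] (A : Type) [AddCommGroup A] [Module F A] where
  mul : A →ₗ[F] A →ₗ[F] A
  mul_comm : ∀ a b, mul a b = mul b a
  mul_assoc : ∀ a b c, mul (mul a b) c = mul a (mul b c)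
  dpow : A → A
  dpow_smul : ∀ (c : F) (a : A), dpow (c • a) = c ^ p • dpow a
  pow_p : ∀ a, mpow mul a (p - 1) = 0
  dpow_add : ∀ a b, dpow (a + b) = dpow a + dpow b +
      ∑ i ∈ Finset.Ioo 0 p, ((-1 : F) ^ i * (i : F)⁻¹) •
        mul (mpow mul a (i - 1)) (mpow mul b (p - i - 1))
  dpow_mul : ∀ a b, dpow (mul a b) = 0

/-- Morphisms of divided power algebras. -/
structure DPHom {p : ℕ} {F : Type} [Field F] {A B : Type}
    [AddCommGroup A] [Module F A] [AddCommGroup B] [Module F B]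
    (S : DPAlg p F A) (T : DPAlg p F B) where
  toFun : A →ₗ[F] B
  map_mul : ∀ a b, toFun (S.mul a b) = T.mul (toFun a) (toFun b)
  map_dpow : ∀ a, toFun (S.dpow a) = T.dpow (toFun a)

/-- A divided power module over a divided power algebra `A`: a module over the
underlying (non-unital) commutative algebra `U(A)` together with a `p`-map `π`. -/
structure DPMod (p : ℕ) {F : Type} [Field F] {A : Type} [AddCommGroup A] [Module F A]
    (S : DPAlg p F A) (M : Type) [AddCommGroup M] [Module F M] where
  smul : A →ₗ[F] M →ₗ[F] M
  mul_smul : ∀ a b m, smul (S.mul a b) m = smul a (smul b m)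
  pmap : M → M
  pmap_add : ∀ m m', pmap (m + m') = pmap m + pmap m'
  pmap_smul : ∀ (c : F) m, pmap (c • m) = c ^ p • pmap m
  pmap_asmul : ∀ (a : A) (m : M), pmap (smul a m) = 0


section Aux
variable {p : ℕ} {F : Type} [Field F]

lemma aux_cast_choose (hp : p.Prime) [CharP F p] :
    ∀ k, k < p → (((p-1).choose k : ℕ) : F) = (-1 : F)^k := by
  intro k
  induction k with
  | zero => intro; simp
  | succ k ih =>
    intro hk
    have h1 : ((p-1).choose k + (p-1).choose (k+1) : ℕ) = p.choose (k+1) := by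
      rw [← Nat.choose_succ_succ', Nat.sub_add_cancel hp.one_le]
    have h2 : (p : ℕ) ∣ p.choose (k+1) := hp.dvd_choose_self (by omega) hk
    have h3 : ((p.choose (k+1) : ℕ) : F) = 0 := by
      obtain ⟨m, hm⟩ := h2
      simp [hm, CharP.cast_eq_zero F p]
    have h4 : (((p-1).choose k : ℕ) : F) + (((p-1).choose (k+1) : ℕ) : F) = 0 := by
      rw [← Nat.cast_add, h1, h3]
    rw [ih (by omega)] at h4
    rw [pow_succ]
    linear_combination h4

lemma aux_neg_one_pow (hp : p.Prime) [CharP F p] : ((-1 : F))^(p-1) = 1 := by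
  haveI := Fact.mk hp
  have h3 : ((-1 : F))^(p-1) * (-1) = -1 := by
    rw [← pow_succ, Nat.sub_add_cancel hp.one_le, neg_one_pow_char F p]
  linear_combination -h3

end Aux

section Key
variable {p : ℕ} {F : Type} [Field F]

lemma aux_key (hp : p.Prime) [CharP F p] {W : Type} [CommRing W] [Algebra F W]
    (a b x y : W) :
    -((a+b)^(p-1) * (x+y)) =
      -(a^(p-1) * x) + -(b^(p-1) * y) +
      ∑ i ∈ Finset.Ioo 0 p, ((-1:F)^i * (i:F)⁻¹) •
        (a^i * ((p-i) • (b^(p-i-1) * y)) + b^(p-i) * (i • (a^(i-1) * x))) := by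
  have hexp : ∀ z : W, (a+b)^(p-1) * z
      = ∑ k ∈ Finset.range p, ((-1:F)^k) • (a^k * b^(p-1-k) * z) := by
    intro z
    have h0 : (a+b)^(p-1) = ∑ k ∈ Finset.range p, a^k * b^(p-1-k) * ((p-1).choose k : ℕ) := by
      have h := add_pow a b (p-1)
      rwa [Nat.sub_add_cancel hp.one_le] at h
    rw [h0, Finset.sum_mul]
    refine Finset.sum_congr rfl (fun k hk => ?_)
    have hk' : k < p := Finset.mem_range.mp hk
    rw [← aux_cast_choose hp k hk', Nat.cast_smul_eq_nsmul, nsmul_eq_mul]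
    push_cast
    ring
  have hIoo : Finset.Ioo 0 p = Finset.Ico 1 p := by
    rw [← Finset.Ico_add_one_left_eq_Ioo, zero_add]
  have hsum : ∑ i ∈ Finset.Ioo 0 p, ((-1:F)^i * (i:F)⁻¹) •
        (a^i * ((p-i) • (b^(p-i-1) * y)) + b^(p-i) * (i • (a^(i-1) * x)))
      = ∑ i ∈ Finset.Ioo 0 p, ((-((-1:F)^i)) • (a^i * b^(p-1-i) * y)
          + ((-1:F)^i) • (a^(i-1) * b^(p-i) * x)) := by
    refine Finset.sum_congr rfl (fun i hi => ?_)
    obtain ⟨hi0, hip⟩ := Finset.mem_Ioo.mp hi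
    have hiF : (i : F) ≠ 0 := by
      intro h
      exact Nat.not_dvd_of_pos_of_lt hi0 hip ((CharP.cast_eq_zero_iff F p i).mp h)
    have e1 : p - i - 1 = p - 1 - i := by omega
    have e2 : ((p - i : ℕ) : F) = -(i : F) := by
      rw [Nat.cast_sub (le_of_lt hip), CharP.cast_eq_zero F p]; ring
    have h1 : a^i * ((p-i) • (b^(p-i-1) * y)) = ((p-i : ℕ) : F) • (a^i * b^(p-1-i) * y) := by
      rw [Nat.cast_smul_eq_nsmul, mul_smul_comm, e1, mul_assoc]
    have h2 : b^(p-i) * (i • (a^(i-1) * x)) = ((i : ℕ) : F) • (a^(i-1) * b^(p-i) * x) := by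
      rw [Nat.cast_smul_eq_nsmul, mul_smul_comm]
      ring_nf
    rw [h1, h2, e2, smul_add, smul_smul, smul_smul]
    congr 1
    · congr 1
      field_simp
    · congr 1
      field_simp
  rw [hsum, Finset.sum_add_distrib]
  have hy : ∑ i ∈ Finset.Ioo 0 p, (-((-1:F)^i)) • (a^i * b^(p-1-i) * y)
      = -(∑ k ∈ Finset.range p, ((-1:F)^k) • (a^k * b^(p-1-k) * y)) + b^(p-1) * y := by
    rw [Finset.range_eq_Ico, Finset.sum_eq_sum_Ico_succ_bot hp.pos, hIoo]
    simp only [pow_zero, one_smul, one_mul, neg_smul, Finset.sum_neg_distrib, Nat.sub_zero]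
    abel
  have hx : ∑ i ∈ Finset.Ioo 0 p, ((-1:F)^i) • (a^(i-1) * b^(p-i) * x)
      = -(∑ k ∈ Finset.range p, ((-1:F)^k) • (a^k * b^(p-1-k) * x)) + a^(p-1) * x := by
    rw [hIoo, Finset.sum_Ico_eq_sum_range]
    have hps : p = (p - 1) + 1 := (Nat.succ_pred_eq_of_pos hp.pos).symm
    have hrr : ∑ k ∈ Finset.range p, ((-1:F)^k) • (a^k * b^(p-1-k) * x)
        = (∑ k ∈ Finset.range (p-1), ((-1:F)^k) • (a^k * b^(p-1-k) * x))
          + ((-1:F)^(p-1)) • (a^(p-1) * b^(p-1-(p-1)) * x) := by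
      conv_lhs => rw [hps]
      rw [Finset.sum_range_succ]
      simp only [Nat.add_sub_cancel]
    rw [hrr, aux_neg_one_pow hp]
    have hterm : ∀ j, ((-1:F)^(1+j)) • (a^(1+j-1) * b^(p-(1+j)) * x)
        = -(((-1:F)^j) • (a^j * b^(p-1-j) * x)) := by
      intro j
      have e3 : 1 + j - 1 = j := by omega
      have e4 : p - (1+j) = p - 1 - j := by omega
      rw [e3, e4, pow_add, pow_one]
      simp [neg_smul]
    simp only [hterm, Finset.sum_neg_distrib, Nat.sub_self, pow_zero, mul_one, one_smul]
    abel
  rw [hy, hx, mul_add, hexp x, hexp y]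
  abel

end Key
section Sq
variable {p : ℕ} {F : Type} [Field F] {E : Type} [AddCommGroup E] [Module F E]

lemma aux_dphom_mpow {A B : Type} [AddCommGroup A] [Module F A] [AddCommGroup B] [Module F B]
    {S : DPAlg p F A} {T : DPAlg p F B} (g : DPHom S T) (e : A) (n : ℕ) :
    g.toFun (mpow S.mul e n) = mpow T.mul (g.toFun e) n := by
  induction n with
  | zero => rfl
  | succ n ih =>
    show g.toFun (S.mul (mpow S.mul e n) e) = T.mul (mpow T.mul (g.toFun e) n) (g.toFun e)
    rw [g.map_mul, ih]

lemma aux_sq (hp : p.Prime) [CharP F p] (SE : DPAlg p F E) :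
    ∃ SB : DPAlg p F (E × E),
      (∀ u v : E × E, SB.mul u v = (SE.mul u.1 v.1, SE.mul u.1 v.2 + SE.mul v.1 u.2)) ∧
      (∀ u : E × E, SB.dpow u = (SE.dpow u.1, - SE.mul (mpow SE.mul u.1 (p-2)) u.2)) := by
  obtain ⟨k2, hk2⟩ : ∃ k, p = k + 2 := ⟨p - 2, by have := hp.two_le; omega⟩
  letI : NonUnitalNonAssocRing E :=
    { (inferInstance : AddCommGroup E) with
      mul := fun a b => SE.mul a b
      left_distrib := fun a b c => map_add (SE.mul a) b c
      right_distrib := fun a b c => by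
        show SE.mul (a + b) c = SE.mul a c + SE.mul b c
        rw [map_add, LinearMap.add_apply]
      zero_mul := fun a => by show SE.mul 0 a = 0; rw [map_zero, LinearMap.zero_apply]
      mul_zero := fun a => map_zero (SE.mul a) }
  letI : NonUnitalRing E := { mul_assoc := SE.mul_assoc }
  letI : NonUnitalCommRing E := { mul_comm := SE.mul_comm }
  haveI : SMulCommClass F E E := ⟨fun c a b => ((SE.mul a).map_smul c b).symm⟩
  haveI : IsScalarTower F E E := ⟨fun c a b => by
    show SE.mul (c • a) b = c • SE.mul a b
    rw [map_smul, LinearMap.smul_apply]⟩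
  have hinj : Function.Injective ((↑) : E → Unitization F E) := Unitization.inr_injective
  have hJm : ∀ a b : E, ((SE.mul a b : E) : Unitization F E) = (a : Unitization F E) * b :=
    fun a b => Unitization.inr_mul F a b
  have hJa : ∀ a b : E, ((a + b : E) : Unitization F E) = (a : Unitization F E) + b :=
    fun a b => Unitization.inr_add F a b
  have hJn : ∀ a : E, ((-a : E) : Unitization F E) = -(a : Unitization F E) :=
    fun a => Unitization.inr_neg F a
  have hJs : ∀ (c : F) (a : E), ((c • a : E) : Unitization F E) = c • (a : Unitization F E) :=
    fun c a => Unitization.inr_smul F c a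
  have hJz : ((0 : E) : Unitization F E) = 0 := Unitization.inr_zero F
  have hJsum : ∀ (s : Finset ℕ) (f : ℕ → E),
      ((∑ i ∈ s, f i : E) : Unitization F E) = ∑ i ∈ s, ((f i : Unitization F E)) :=
    fun s f => map_sum (Unitization.inrHom F F E) f s
  have hmp : ∀ (a : E) (n : ℕ),
      ((mpow SE.mul a n : E) : Unitization F E) = (a : Unitization F E)^(n+1) := by
    intro a n
    induction n with
    | zero => show (a : Unitization F E) = (a : Unitization F E)^1; rw [pow_one]
    | succ n ih =>
      show ((SE.mul (mpow SE.mul a n) a : E) : Unitization F E) = _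
      rw [hJm, ih, ← pow_succ]
  have hpow0 : ∀ e : E, (e : Unitization F E)^p = 0 := by
    intro e
    have h : ((mpow SE.mul e (p-1) : E) : Unitization F E) = ((0:E) : Unitization F E) := by
      rw [SE.pow_p]
    rw [hmp, Nat.sub_add_cancel hp.one_le, hJz] at h
    exact h
  have hms : ∀ (c : F) (a : E) (n : ℕ), mpow SE.mul (c • a) n = c^(n+1) • mpow SE.mul a n := by
    intro c a n
    induction n with
    | zero => show c • a = c^1 • a; rw [pow_one]
    | succ n ih =>
      show SE.mul (mpow SE.mul (c • a) n) (c • a) = c^(n+1+1) • SE.mul (mpow SE.mul a n) a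
      rw [ih]
      show (c^(n+1) • mpow SE.mul a n) * (c • a) = c^(n+1+1) • (mpow SE.mul a n * a)
      rw [smul_mul_assoc, mul_smul_comm, smul_smul, ← pow_succ]
  -- square-zero multiplication
  set mulB : (E × E) →ₗ[F] (E × E) →ₗ[F] (E × E) := LinearMap.mk₂ F
      (fun u v => (SE.mul u.1 v.1, SE.mul u.1 v.2 + SE.mul v.1 u.2))
      (fun u u' v => by
        apply Prod.ext_iff.mpr
        constructor <;>
          simp only [Prod.fst_add, Prod.snd_add, Prod.mk_add_mk, map_add, LinearMap.add_apply] <;>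
          abel)
      (fun c u v => by
        apply Prod.ext_iff.mpr
        constructor <;>
          simp only [Prod.smul_fst, Prod.smul_snd, Prod.smul_mk, map_smul, LinearMap.smul_apply,
            smul_add] <;>
          abel)
      (fun u v v' => by
        apply Prod.ext_iff.mpr
        constructor <;>
          simp only [Prod.fst_add, Prod.snd_add, Prod.mk_add_mk, map_add, LinearMap.add_apply] <;>
          abel)
      (fun c u v => by
        apply Prod.ext_iff.mpr
        constructor <;>
          simp only [Prod.smul_fst, Prod.smul_snd, Prod.smul_mk, map_smul, LinearMap.smul_apply,
            smul_add] <;>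
          abel)
    with hmulBdef
  have hmulB : ∀ u v : E × E, mulB u v = (SE.mul u.1 v.1, SE.mul u.1 v.2 + SE.mul v.1 u.2) :=
    fun u v => rfl
  have hmpB1 : ∀ (u : E × E) (n : ℕ), (mpow mulB u n).1 = mpow SE.mul u.1 n := by
    intro u n
    induction n with
    | zero => rfl
    | succ n ih =>
      show SE.mul (mpow mulB u n).1 u.1 = SE.mul (mpow SE.mul u.1 n) u.1
      rw [ih]
  have hmpB2 : ∀ (u : E × E) (n : ℕ),
      (((mpow mulB u n).2 : E) : Unitization F E)
        = (n+1) • ((u.1 : Unitization F E)^n * (u.2 : Unitization F E)) := by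
    intro u n
    induction n with
    | zero =>
      show ((u.2 : E) : Unitization F E) = 1 • ((u.1 : Unitization F E)^0 * u.2)
      rw [one_smul, pow_zero, one_mul]
    | succ n ih =>
      show ((SE.mul (mpow mulB u n).1 u.2 + SE.mul u.1 (mpow mulB u n).2 : E) : Unitization F E)
        = (n+1+1) • ((u.1 : Unitization F E)^(n+1) * u.2)
      rw [hJa, hJm, hJm, hmpB1, hmp, ih, mul_smul_comm, ← mul_assoc, ← pow_succ',
        succ_nsmul ((u.1 : Unitization F E)^(n+1) * (u.2 : Unitization F E)) (n+1), add_comm]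
  refine ⟨{
    mul := mulB
    mul_comm := fun u v => by
      rw [hmulB, hmulB]
      exact Prod.ext_iff.mpr ⟨SE.mul_comm u.1 v.1, add_comm _ _⟩
    mul_assoc := fun u v w => by
      apply Prod.ext_iff.mpr
      refine ⟨SE.mul_assoc u.1 v.1 w.1, hinj ?_⟩
      show ((SE.mul (SE.mul u.1 v.1) w.2 + SE.mul w.1 (SE.mul u.1 v.2 + SE.mul v.1 u.2) : E) :
          Unitization F E)
        = ((SE.mul u.1 (SE.mul v.1 w.2 + SE.mul w.1 v.2) + SE.mul (SE.mul v.1 w.1) u.2 : E) :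
          Unitization F E)
      simp only [hJa, hJm]
      ring
    dpow := fun u => (SE.dpow u.1, - SE.mul (mpow SE.mul u.1 (p-2)) u.2)
    dpow_smul := fun c u => by
      apply Prod.ext_iff.mpr
      constructor
      · exact SE.dpow_smul c u.1
      · show -SE.mul (mpow SE.mul (c • u.1) (p-2)) (c • u.2)
          = c ^ p • -SE.mul (mpow SE.mul u.1 (p-2)) u.2
        rw [hms]
        show -((c^(p-2+1) • mpow SE.mul u.1 (p-2)) * (c • u.2))
          = c ^ p • -(mpow SE.mul u.1 (p-2) * u.2)
        rw [smul_mul_assoc, mul_smul_comm, smul_smul, ← pow_succ, smul_neg,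
          show p-2+1+1 = p from by omega]
    pow_p := fun u => by
      apply Prod.ext_iff.mpr
      refine ⟨(hmpB1 u (p-1)).trans (SE.pow_p u.1), hinj ?_⟩
      show (((mpow mulB u (p-1)).2 : E) : Unitization F E) = ((0 : E) : Unitization F E)
      rw [hmpB2 u (p-1), Nat.sub_add_cancel hp.one_le, hJz,
        ← Nat.cast_smul_eq_nsmul F, CharP.cast_eq_zero F p, zero_smul]
    dpow_add := fun u v => by
      have e1 : p - 2 + 1 = p - 1 := by omega
      apply Prod.ext_iff.mpr
      constructor
      · show SE.dpow ((u+v).1) = SE.dpow u.1 + SE.dpow v.1 +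
          (∑ i ∈ Finset.Ioo 0 p, ((-1:F)^i * (i:F)⁻¹) •
            mulB (mpow mulB u (i-1)) (mpow mulB v (p-i-1))).1
        show SE.dpow (u.1 + v.1) = SE.dpow u.1 + SE.dpow v.1 +
          (∑ i ∈ Finset.Ioo 0 p, ((-1:F)^i * (i:F)⁻¹) •
            mulB (mpow mulB u (i-1)) (mpow mulB v (p-i-1))).1
        rw [SE.dpow_add, Prod.fst_sum]
        congr 1
        refine Finset.sum_congr rfl (fun i hi => ?_)
        rw [Prod.smul_fst]
        congr 1
        show _ = SE.mul (mpow mulB u (i-1)).1 (mpow mulB v (p-i-1)).1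
        rw [hmpB1, hmpB1]
      · refine hinj ?_
        have hkey := aux_key (p := p) (F := F) hp (W := Unitization F E)
          (u.1 : Unitization F E) (v.1 : Unitization F E)
          (u.2 : Unitization F E) (v.2 : Unitization F E)
        have hL : ((-SE.mul (mpow SE.mul ((u+v).1) (p-2)) ((u+v).2) : E) : Unitization F E)
            = -(((u.1 : Unitization F E) + v.1)^(p-1)
                * ((u.2 : Unitization F E) + v.2)) := by
          show ((-SE.mul (mpow SE.mul (u.1 + v.1) (p-2)) (u.2 + v.2) : E) : Unitization F E) = _
          rw [hJn, hJm, hmp, e1, hJa, hJa]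
        have hR : (((-SE.mul (mpow SE.mul u.1 (p-2)) u.2
                + -SE.mul (mpow SE.mul v.1 (p-2)) v.2
                + (∑ i ∈ Finset.Ioo 0 p, ((-1:F)^i * (i:F)⁻¹) •
                    mulB (mpow mulB u (i-1)) (mpow mulB v (p-i-1))).2 : E)) : Unitization F E)
            = -((u.1 : Unitization F E)^(p-1) * u.2)
              + -((v.1 : Unitization F E)^(p-1) * v.2)
              + ∑ i ∈ Finset.Ioo 0 p, ((-1:F)^i * (i:F)⁻¹) •
                  ((u.1 : Unitization F E)^i
                      * ((p-i) • ((v.1 : Unitization F E)^(p-i-1) * v.2))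
                    + (v.1 : Unitization F E)^(p-i)
                      * (i • ((u.1 : Unitization F E)^(i-1) * u.2))) := by
          rw [hJa, hJa, hJn, hJn, hJm, hJm, hmp, hmp, e1]
          congr 1
          rw [Prod.snd_sum, hJsum]
          refine Finset.sum_congr rfl (fun i hi => ?_)
          obtain ⟨hi0, hip⟩ := Finset.mem_Ioo.mp hi
          rw [Prod.smul_snd, hJs]
          congr 1
          show ((SE.mul (mpow mulB u (i-1)).1 (mpow mulB v (p-i-1)).2
              + SE.mul (mpow mulB v (p-i-1)).1 (mpow mulB u (i-1)).2 : E) : Unitization F E) = _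
          rw [hJa, hJm, hJm, hmpB1, hmpB1, hmp, hmp, hmpB2, hmpB2,
            show i-1+1 = i from by omega, show p-i-1+1 = p-i from by omega]
        exact hL.trans (hkey.trans hR.symm)
    dpow_mul := fun u v => by
      apply Prod.ext_iff.mpr
      refine ⟨SE.dpow_mul u.1 v.1, hinj ?_⟩
      show ((-SE.mul (mpow SE.mul (SE.mul u.1 v.1) (p-2))
          (SE.mul u.1 v.2 + SE.mul v.1 u.2) : E) : Unitization F E)
        = ((0 : E) : Unitization F E)
      rw [hJn]
      simp only [hJm, hJa, hmp, hJz]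
      rw [show p-2+1 = k2+1 from by omega]
      have hr : ((u.1 : Unitization F E) * v.1)^(k2+1)
            * ((u.1 : Unitization F E) * v.2 + (v.1 : Unitization F E) * u.2)
          = (u.1 : Unitization F E)^(k2+2) * ((v.1 : Unitization F E)^(k2+1) * v.2)
            + (v.1 : Unitization F E)^(k2+2) * ((u.1 : Unitization F E)^(k2+1) * u.2) := by
        ring
      rw [hr, show k2+2 = p from by omega, hpow0, hpow0]
      simp }, fun u v => rfl, fun u => rfl⟩

end Sq

/-- Let `A` be a divided power algebra, `M` a module over the
underlying commutative algebra `U(A)`, and let `E = Γ⁺_A(M)` be the free divided power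
`A`-algebra on `M` (characterised by its universal property via `q : A → E` and
`ι : M → E`), with `T°(E) = Γ⁺_E(Ω¹_E)` (characterised by its universal property via
the inclusion `pE : E → T°(E)` and the universal special derivation `dE`).  Then the
lift `λ : T°(Γ⁺_A(M)) → Γ⁺_A(M)` determined on generators by `λ(a) = a`, `λ(m) = 0`,
`λ(da) = 0`, `λ(dm) = m` is a well-defined morphism of divided power algebras. -/
theorem lift_on_free_bundle_is_morphism
    (p : ℕ) (hp : p.Prime) (F : Type) [Field F] [CharP F p]
    (A M E TE : Type) [AddCommGroup A] [Module F A] [AddCommGroup M] [Module F M]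
    [AddCommGroup E] [Module F E] [AddCommGroup TE] [Module F TE]
    (S : DPAlg p F A)
    -- the `U(A)`-module structure on `M`
    (sm : A →ₗ[F] M →ₗ[F] M)
    (hsm : ∀ a b m, sm (S.mul a b) m = sm a (sm b m))
    -- `E = Γ⁺_A(M)`, the free divided power `A`-algebra on `M`
    (SE : DPAlg p F E) (q : DPHom S SE) (ι : M →ₗ[F] E)
    (hι : ∀ a m, ι (sm a m) = SE.mul (q.toFun a) (ι m))
    (hEuniv : ∀ (B : Type) [AddCommGroup B] [Module F B] (SB : DPAlg p F B)
      (f : DPHom S SB) (φ : M →ₗ[F] B),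
      (∀ a m, φ (sm a m) = SB.mul (f.toFun a) (φ m)) →
      ∃! g : DPHom SE SB,
        (∀ a, g.toFun (q.toFun a) = f.toFun a) ∧ (∀ m, g.toFun (ι m) = φ m))
    -- `T°(E) = Γ⁺_E(Ω¹_E)`, with inclusion `pE` and universal special derivation `dE`
    (STE : DPAlg p F TE) (pE : DPHom SE STE) (dE : E →ₗ[F] TE)
    (hd1 : ∀ e e', dE (SE.mul e e') =
      STE.mul (pE.toFun e) (dE e') + STE.mul (pE.toFun e') (dE e))
    (hd2 : ∀ e, dE (SE.dpow e) =
      - STE.mul (pE.toFun (mpow SE.mul e (p - 2))) (dE e))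
    (hTuniv : ∀ (B : Type) [AddCommGroup B] [Module F B] (SB : DPAlg p F B)
      (g : DPHom SE SB) (D : E →ₗ[F] B),
      (∀ e e', D (SE.mul e e') =
        SB.mul (g.toFun e) (D e') + SB.mul (g.toFun e') (D e)) →
      (∀ e, D (SE.dpow e) =
        - SB.mul (g.toFun (mpow SE.mul e (p - 2))) (D e)) →
      ∃! h : DPHom STE SB,
        (∀ e, h.toFun (pE.toFun e) = g.toFun e) ∧ (∀ e, h.toFun (dE e) = D e)) :
    ∃ lam : DPHom STE SE,
      (∀ a, lam.toFun (pE.toFun (q.toFun a)) = q.toFun a) ∧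
      (∀ m, lam.toFun (pE.toFun (ι m)) = 0) ∧
      (∀ a, lam.toFun (dE (q.toFun a)) = 0) ∧
      (∀ m, lam.toFun (dE (ι m)) = ι m) := by
  obtain ⟨SB, hmulB, hdpowB⟩ := aux_sq hp SE
  let f : DPHom S SB := {
    toFun := (LinearMap.inl F E E).comp q.toFun
    map_mul := fun a b => by
      show ((q.toFun (S.mul a b), 0) : E × E) = SB.mul (q.toFun a, 0) (q.toFun b, 0)
      rw [hmulB, q.map_mul]
      simp
    map_dpow := fun a => by
      show ((q.toFun (S.dpow a), 0) : E × E) = SB.dpow (q.toFun a, 0)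
      rw [hdpowB, q.map_dpow]
      simp }
  let φ : M →ₗ[F] E × E := (LinearMap.inr F E E).comp ι
  have hφ : ∀ a m, φ (sm a m) = SB.mul (f.toFun a) (φ m) := fun a m => by
    show ((0, ι (sm a m)) : E × E) = SB.mul (q.toFun a, 0) (0, ι m)
    rw [hmulB, hι]
    simp
  obtain ⟨h, ⟨hq, hι'⟩, -⟩ := hEuniv (E × E) SB f φ hφ
  let g : DPHom SE SE := {
    toFun := (LinearMap.fst F E E).comp h.toFun
    map_mul := fun e e' => by
      show (h.toFun (SE.mul e e')).1 = SE.mul (h.toFun e).1 (h.toFun e').1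
      rw [h.map_mul, hmulB]
    map_dpow := fun e => by
      show (h.toFun (SE.dpow e)).1 = SE.dpow (h.toFun e).1
      rw [h.map_dpow, hdpowB] }
  let D : E →ₗ[F] E := (LinearMap.snd F E E).comp h.toFun
  have hD1 : ∀ e e', D (SE.mul e e')
      = SE.mul (g.toFun e) (D e') + SE.mul (g.toFun e') (D e) := fun e e' => by
    show (h.toFun (SE.mul e e')).2
      = SE.mul (h.toFun e).1 (h.toFun e').2 + SE.mul (h.toFun e').1 (h.toFun e).2
    rw [h.map_mul, hmulB]
  have hD2 : ∀ e, D (SE.dpow e)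
      = - SE.mul (g.toFun (mpow SE.mul e (p-2))) (D e) := fun e => by
    show (h.toFun (SE.dpow e)).2
      = - SE.mul ((h.toFun (mpow SE.mul e (p-2))).1) (h.toFun e).2
    rw [h.map_dpow, hdpowB,
      show (h.toFun (mpow SE.mul e (p-2))).1 = mpow SE.mul (h.toFun e).1 (p-2) from
        aux_dphom_mpow g e (p-2)]
  obtain ⟨lam, ⟨hlp, hld⟩, -⟩ := hTuniv E SE g D hD1 hD2
  refine ⟨lam, fun a => ?_, fun m => ?_, fun a => ?_, fun m => ?_⟩
  · rw [hlp]
    show (h.toFun (q.toFun a)).1 = q.toFun a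
    rw [hq a]
    rfl
  · rw [hlp]
    show (h.toFun (ι m)).1 = 0
    rw [hι' m]
    rfl
  · rw [hld]
    show (h.toFun (q.toFun a)).2 = 0
    rw [hq a]
    rfl
  · rw [hld]
    show (h.toFun (ι m)).2 = ι m
    rw [hι' m]
    rfl
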